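/- For history-deterministic labelled transition systems A and B, the following are equivalent: (1) A and B are in two-sided simulation relation; (2) L_T(A) = L_T(B). -/
import Mathlib


/-- A labelled transition system over alphabet `A`. -/
structure LTS (A : Type) where
  Conf : Type
  init : Conf
  Step : Conf → A → Conf → Prop

/-- `Reads L c w` : there is a path from configuration `c` reading the word `w`. -/
inductive LTS.Reads {A : Type} (L : LTS A) : L.Conf → List A → Prop
  | nil (c : L.Conf) : LTS.Reads L c []
  | cons {c c' : L.Conf} {a : A} {w : List A} :
      L.Step c a c' → LTS.Reads L c' w → LTS.Reads L c (a :: w)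

/-- The trace language of an LTS: all words readable from the initial configuration. -/
def LTS.TraceLang {A : Type} (L : LTS A) : Set (List A) :=
  {w | L.Reads L.init w}

/-- `Simulates P Q` : `P` simulates `Q` (Duplicator plays in `P`, Spoiler in `Q`),
via a simulation relation containing the pair of initial configurations. -/
def Simulates {A : Type} (P Q : LTS A) : Prop :=
  ∃ S : P.Conf → Q.Conf → Prop, S P.init Q.init ∧
    ∀ cP cQ, S cP cQ → ∀ a cQ', Q.Step cQ a cQ' →
      ∃ cP', P.Step cP a cP' ∧ S cP' cQ'

/-- Two-sided simulation: each LTS simulates the other. -/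
def TwoSidedSim {A : Type} (P Q : LTS A) : Prop :=
  Simulates P Q ∧ Simulates Q P

/-- The run induced by a resolver `r` (a function of the history of the run,
the current configuration and the next letter) is valid along `w`:
every transition chosen by the resolver is enabled. -/
inductive ResolverRun {A : Type} (L : LTS A)
    (r : List (L.Conf × A) → L.Conf → A → L.Conf) :
    List (L.Conf × A) → L.Conf → List A → Prop
  | nil (h : List (L.Conf × A)) (c : L.Conf) : ResolverRun L r h c []
  | cons {h : List (L.Conf × A)} {c : L.Conf} {a : A} {w : List A} :
      L.Step c a (r h c a) →
      ResolverRun L r (h ++ [(c, a)]) (r h c a) w →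
      ResolverRun L r h c (a :: w)

/-- `r` is a resolver for `L`: following `r` from the initial configuration
produces a valid run over every word of the trace language. -/
def IsResolver {A : Type} (L : LTS A)
    (r : List (L.Conf × A) → L.Conf → A → L.Conf) : Prop :=
  ∀ w ∈ L.TraceLang, ResolverRun L r [] L.init w

/-- An LTS is history-deterministic if it admits a resolver. -/
def HistoryDeterministic {A : Type} (L : LTS A) : Prop :=
  ∃ r, IsResolver L r

/-- Path ending at a given configuration. -/
inductive ReadsTo {A : Type} (L : LTS A) : L.Conf → List A → L.Conf → Prop
  | nil (c : L.Conf) : ReadsTo L c [] c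
  | cons {c c' c'' : L.Conf} {a : A} {w : List A} :
      L.Step c a c' → ReadsTo L c' w c'' → ReadsTo L c (a :: w) c''

lemma readsTo_reads {A : Type} {L : LTS A} {c c' : L.Conf} {w : List A}
    (h : ReadsTo L c w c') : L.Reads c w := by
  induction h with
  | nil => exact LTS.Reads.nil _
  | cons hs _ ih => exact LTS.Reads.cons hs ih

lemma readsTo_snoc {A : Type} {L : LTS A} {c c' c'' : L.Conf} {w : List A} {a : A}
    (h : ReadsTo L c w c') (hs : L.Step c' a c'') : ReadsTo L c (w ++ [a]) c'' := by
  induction h with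
  | nil => exact ReadsTo.cons hs (ReadsTo.nil _)
  | cons hst _ ih => exact ReadsTo.cons hst (ih hs)

/-- The (history, configuration) pair reached by following resolver `r`. -/
def runPair {A : Type} (L : LTS A) (r : List (L.Conf × A) → L.Conf → A → L.Conf) :
    List (L.Conf × A) → L.Conf → List A → List (L.Conf × A) × L.Conf
  | h, c, [] => (h, c)
  | h, c, a :: w => runPair L r (h ++ [(c, a)]) (r h c a) w

lemma step_of_run {A : Type} {L : LTS A} {r : List (L.Conf × A) → L.Conf → A → L.Conf}
    {a : A} : ∀ (w : List A) (h : List (L.Conf × A)) (c : L.Conf),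
    ResolverRun L r h c (w ++ [a]) →
    L.Step (runPair L r h c w).2 a
      (r (runPair L r h c w).1 (runPair L r h c w).2 a) := by
  intro w
  induction w with
  | nil => intro h c hr; cases hr with | cons hs _ => exact hs
  | cons b w ih =>
      intro h c hr
      cases hr with
      | cons hs hr' => exact ih _ _ hr'

lemma runPair_snoc {A : Type} {L : LTS A} {r : List (L.Conf × A) → L.Conf → A → L.Conf}
    {a : A} : ∀ (w : List A) (h : List (L.Conf × A)) (c : L.Conf),
    (runPair L r h c (w ++ [a])).2 =
      r (runPair L r h c w).1 (runPair L r h c w).2 a := by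
  intro w
  induction w with
  | nil => intro h c; rfl
  | cons b w ih => intro h c; exact ih _ _

lemma sim_trace_subset {A : Type} {P Q : LTS A} (h : Simulates P Q) :
    Q.TraceLang ⊆ P.TraceLang := by
  obtain ⟨S, hinit, hstep⟩ := h
  have key : ∀ (w : List A) (cP : P.Conf) (cQ : Q.Conf),
      S cP cQ → Q.Reads cQ w → P.Reads cP w := by
    intro w
    induction w with
    | nil => intro _ _ _ _; exact LTS.Reads.nil _
    | cons a w ih =>
        intro cP cQ hS hr
        cases hr with
        | cons hs hr' =>
            obtain ⟨cP', hsP, hS'⟩ := hstep _ _ hS _ _ hs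
            exact LTS.Reads.cons hsP (ih _ _ hS' hr')
  intro w hw
  exact key w _ _ hinit hw

lemma sim_of_traceLang_subset {A : Type} {P Q : LTS A}
    (hP : HistoryDeterministic P) (hsub : Q.TraceLang ⊆ P.TraceLang) :
    Simulates P Q := by
  obtain ⟨r, hr⟩ := hP
  refine ⟨fun cP cQ => ∃ w : List A, ReadsTo Q Q.init w cQ ∧
      cP = (runPair P r [] P.init w).2, ⟨[], ReadsTo.nil _, rfl⟩, ?_⟩
  rintro cP cQ ⟨w, hw, rfl⟩ a cQ' hs
  have hmem : (w ++ [a]) ∈ P.TraceLang :=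
    hsub (readsTo_reads (readsTo_snoc hw hs))
  have hrun := hr _ hmem
  refine ⟨(runPair P r [] P.init (w ++ [a])).2, ?_, ⟨w ++ [a], readsTo_snoc hw hs, rfl⟩⟩
  rw [runPair_snoc]
  exact step_of_run w [] P.init hrun

/-- For history-deterministic LTSs, two-sided simulation is equivalent
to trace-language equality. -/
theorem hd_twoSidedSim_iff_traceLang_eq {A : Type} (P Q : LTS A)
    (hP : HistoryDeterministic P) (hQ : HistoryDeterministic Q) :
    TwoSidedSim P Q ↔ P.TraceLang = Q.TraceLang := by
  constructor
  · rintro ⟨h1, h2⟩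
    exact Set.Subset.antisymm (sim_trace_subset h2) (sim_trace_subset h1)
  · intro h
    exact ⟨sim_of_traceLang_subset hP h.symm.subset,
           sim_of_traceLang_subset hQ h.subset⟩
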